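/- arXiv:1708.04713 — 5 statements merged into one kernel-verified Lean document; each statement's English description precedes it below -/
import Mathlib

section
/- Let f ∈ ℤ[x] be nonconstant with not all coefficients divisible by p. Then the number of a ∈ {0, 1, ..., p²−1} with f(a) ≡ 0 mod p² equals n₁ + p·n₂, where n₁ is the number of simple roots r ∈ ℤ/pℤ of f mod p, and n₂ is the number of degenerate roots r ∈ {0,...,p−1} of f mod p (i.e., f(r) ≡ f'(r) ≡ 0 mod p) that additionally satisfy f(r) ≡ 0 mod p². -/
open Polynomial

private lemma aux_sq_dvd {R : Type*} [CommRing R] (g : R[X]) (r : R) :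
    (X - C r) ^ 2 ∣ g ↔ g.IsRoot r ∧ g.derivative.IsRoot r := by
  constructor
  · rintro ⟨h, rfl⟩
    constructor
    · simp [IsRoot]
    · simp [IsRoot, derivative_mul, derivative_pow]
  · rintro ⟨h1, h2⟩
    obtain ⟨h, rfl⟩ := (dvd_iff_isRoot).mpr h1
    have hh : h.IsRoot r := by
      have := h2
      rw [derivative_mul] at this
      simpa [IsRoot] using this
    obtain ⟨k, rfl⟩ := (dvd_iff_isRoot).mpr hh
    exact ⟨k, by ring⟩

private lemma aux_dvd_add_iff {A B : ℤ} (q : ℤ) (hB : q ∣ B) : q ∣ A + B ↔ q ∣ A :=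
  ⟨fun h => by simpa using h.sub hB, fun h => h.add hB⟩

theorem stmt7 (p : ℕ) (hp : p.Prime) (f : Polynomial ℤ)
    (hf : 0 < f.natDegree)
    (hcoeff : ¬ ∀ n, (p : ℤ) ∣ f.coeff n) :
    ((Finset.range (p ^ 2)).filter (fun a : ℕ => (p : ℤ) ^ 2 ∣ f.eval (a : ℤ))).card =
      {r : ZMod p | (X - C r) ∣ f.map (Int.castRingHom (ZMod p)) ∧
          ¬ (X - C r) ^ 2 ∣ f.map (Int.castRingHom (ZMod p))}.ncard
        + p * ((Finset.range p).filter (fun r : ℕ =>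
            (p : ℤ) ∣ f.eval (r : ℤ) ∧ (p : ℤ) ∣ f.derivative.eval (r : ℤ) ∧
              (p : ℤ) ^ 2 ∣ f.eval (r : ℤ))).card := by
  haveI : Fact p.Prime := ⟨hp⟩
  have hp0 : 0 < p := hp.pos
  have hpz : (p : ℤ) ≠ 0 := by exact_mod_cast hp.ne_zero
  set φ := Int.castRingHom (ZMod p)
  set g := f.map φ with hg
  -- evaluation compatibility
  have heval : ∀ a : ℤ, g.eval ((a : ZMod p)) = ((f.eval a : ℤ) : ZMod p) := by
    intro a
    rw [hg, eval_map]
    exact eval₂_at_apply φ a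
  have hevald : ∀ a : ℤ, g.derivative.eval ((a : ZMod p)) =
      ((f.derivative.eval a : ℤ) : ZMod p) := by
    intro a
    rw [hg, derivative_map, eval_map]
    exact eval₂_at_apply φ a
  -- Step A: the ncard equals a Finset card over ZMod p
  classical
  have hA : {r : ZMod p | (X - C r) ∣ g ∧ ¬ (X - C r) ^ 2 ∣ g}.ncard =
      (Finset.univ.filter (fun r : ZMod p =>
        g.IsRoot r ∧ ¬ g.derivative.IsRoot r)).card := by
    rw [← Set.ncard_coe_finset]
    congr 1
    ext r
    simp only [Finset.coe_filter, Set.mem_setOf_eq, Finset.mem_univ, true_and,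
      dvd_iff_isRoot, aux_sq_dvd]
    tauto
  -- Step B: transfer to a filter over range p
  have hB : (Finset.univ.filter (fun r : ZMod p =>
        g.IsRoot r ∧ ¬ g.derivative.IsRoot r)).card =
      ((Finset.range p).filter (fun r : ℕ =>
        (p : ℤ) ∣ f.eval (r : ℤ) ∧ ¬ (p : ℤ) ∣ f.derivative.eval (r : ℤ))).card := by
    symm
    apply Finset.card_nbij' (fun r : ℕ => (r : ZMod p)) (fun r : ZMod p => r.val)
    · intro r hr
      simp only [Finset.mem_coe, Finset.mem_filter, Finset.mem_range] at hr
      obtain ⟨hrp, h1, h2⟩ := hr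
      rw [Finset.mem_coe, Finset.mem_filter]
      simp only [Finset.mem_coe, Finset.mem_filter, Finset.mem_univ, true_and, IsRoot]
      constructor
      · rw [show ((r : ℕ) : ZMod p) = (((r : ℕ) : ℤ) : ZMod p) by push_cast; ring,
          heval, ZMod.intCast_zmod_eq_zero_iff_dvd]
        exact h1
      · rw [show ((r : ℕ) : ZMod p) = (((r : ℕ) : ℤ) : ZMod p) by push_cast; ring,
          hevald, ZMod.intCast_zmod_eq_zero_iff_dvd]
        exact h2
    · intro r hr
      rw [Finset.mem_coe, Finset.mem_filter] at hr
      simp only [Finset.mem_coe, Finset.mem_filter, Finset.mem_univ, true_and, IsRoot] at hr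
      obtain ⟨h1, h2⟩ := hr
      have hv : ((r.val : ℕ) : ZMod p) = r := by
        simp [ZMod.natCast_val, ZMod.cast_id]
      simp only [Finset.mem_coe, Finset.mem_filter, Finset.mem_range]
      refine ⟨r.val_lt, ?_, ?_⟩
      · rw [← ZMod.intCast_zmod_eq_zero_iff_dvd, ← heval]
        rw [show (((r.val : ℕ) : ℤ) : ZMod p) = ((r.val : ℕ) : ZMod p) by push_cast; ring, hv]
        exact h1
      · rw [← ZMod.intCast_zmod_eq_zero_iff_dvd, ← hevald]
        rw [show (((r.val : ℕ) : ℤ) : ZMod p) = ((r.val : ℕ) : ZMod p) by push_cast; ring, hv]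
        exact h2
    · intro r hr
      simp only [Finset.mem_coe, Finset.mem_filter, Finset.mem_range] at hr
      exact ZMod.val_cast_of_lt hr.1
    · intro r _
      simp [ZMod.natCast_val, ZMod.cast_id]
  -- Step C: fiber decomposition of the LHS
  have hC : ((Finset.range (p ^ 2)).filter
        (fun a : ℕ => (p : ℤ) ^ 2 ∣ f.eval (a : ℤ))).card =
      ∑ r ∈ Finset.range p, ((Finset.range p).filter
        (fun t : ℕ => (p : ℤ) ^ 2 ∣ f.eval ((r + p * t : ℕ) : ℤ))).card := by
    rw [Finset.card_eq_sum_card_fiberwise (f := fun a : ℕ => a % p)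
      (t := Finset.range p) (fun a _ => Finset.mem_range.mpr (Nat.mod_lt a hp0))]
    refine Finset.sum_congr rfl fun r hr => ?_
    rw [Finset.mem_range] at hr
    apply Finset.card_nbij' (fun a : ℕ => a / p) (fun t : ℕ => r + p * t)
    · intro a ha
      simp only [Finset.mem_coe, Finset.mem_filter, Finset.mem_range] at ha ⊢
      obtain ⟨⟨hap, hdvd⟩, hmod⟩ := ha
      constructor
      · rw [pow_two] at hap
        exact Nat.div_lt_of_lt_mul hap
      · rwa [show r + p * (a / p) = a by rw [← hmod]; exact Nat.mod_add_div a p]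
    · intro t ht
      simp only [Finset.mem_coe, Finset.mem_filter, Finset.mem_range] at ht ⊢
      obtain ⟨htp, hdvd⟩ := ht
      refine ⟨⟨?_, hdvd⟩, ?_⟩
      · calc r + p * t < p + p * t := by omega
          _ = p * (t + 1) := by ring
          _ ≤ p * p := Nat.mul_le_mul_left p (by omega)
          _ = p ^ 2 := (pow_two p).symm
      · simp [Nat.add_mul_mod_self_left, Nat.mod_eq_of_lt hr]
    · intro a ha
      simp only [Finset.mem_coe, Finset.mem_filter, Finset.mem_range] at ha
      rw [← ha.2]
      exact Nat.mod_add_div a p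
    · intro t ht
      dsimp only
      rw [Nat.add_mul_div_left _ _ hp0, Nat.div_eq_of_lt hr, zero_add]
  -- Step D: compute each fiber's cardinality
  have hD : ∀ r ∈ Finset.range p,
      ((Finset.range p).filter
        (fun t : ℕ => (p : ℤ) ^ 2 ∣ f.eval ((r + p * t : ℕ) : ℤ))).card =
      (if (p : ℤ) ∣ f.eval (r : ℤ) ∧ ¬ (p : ℤ) ∣ f.derivative.eval (r : ℤ)
        then 1 else 0)
      + p * (if (p : ℤ) ∣ f.eval (r : ℤ) ∧ (p : ℤ) ∣ f.derivative.eval (r : ℤ) ∧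
          (p : ℤ) ^ 2 ∣ f.eval (r : ℤ) then 1 else 0) := by
    intro r hr
    rw [Finset.mem_range] at hr
    have hcast : ∀ t : ℕ, ((r + p * t : ℕ) : ℤ) = (r : ℤ) + (p : ℤ) * (t : ℤ) := by
      intro t; push_cast; ring
    by_cases h1 : (p : ℤ) ∣ f.eval (r : ℤ)
    · by_cases h2 : (p : ℤ) ∣ f.derivative.eval (r : ℤ)
      · -- degenerate case
        have hiff : ∀ t : ℕ, ((p : ℤ) ^ 2 ∣ f.eval ((r + p * t : ℕ) : ℤ)) ↔
            (p : ℤ) ^ 2 ∣ f.eval (r : ℤ) := by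
          intro t
          obtain ⟨k, hk⟩ := f.binomExpansion (r : ℤ) ((p : ℤ) * t)
          obtain ⟨e, he⟩ := h2
          rw [hcast t, hk, add_assoc, aux_dvd_add_iff]
          refine dvd_add ⟨e * t, by rw [he]; ring⟩ ⟨k * t ^ 2, by ring⟩
        by_cases h3 : (p : ℤ) ^ 2 ∣ f.eval (r : ℤ)
        · rw [if_neg (by tauto), if_pos ⟨h1, h2, h3⟩]
          rw [Finset.filter_true_of_mem (fun t _ => (hiff t).mpr h3)]
          simp [Finset.card_range]
        · rw [if_neg (by tauto), if_neg (by tauto)]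
          rw [Finset.filter_false_of_mem (fun t _ => fun h => h3 ((hiff t).mp h))]
          simp
      · -- simple case
        rw [if_pos ⟨h1, h2⟩, if_neg (by tauto)]
        obtain ⟨c, hc⟩ := h1
        set d : ZMod p := ((f.derivative.eval (r : ℤ) : ℤ) : ZMod p) with hd
        have hdne : d ≠ 0 := fun h => h2 ((ZMod.intCast_zmod_eq_zero_iff_dvd _ _).mp h)
        set u : ZMod p := (-(c : ZMod p)) * d⁻¹ with hu
        have hiff : ∀ t : ℕ, ((p : ℤ) ^ 2 ∣ f.eval ((r + p * t : ℕ) : ℤ)) ↔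
            ((t : ZMod p) = u) := by
          intro t
          obtain ⟨k, hk⟩ := f.binomExpansion (r : ℤ) ((p : ℤ) * t)
          have step1 : ((p : ℤ) ^ 2 ∣ f.eval ((r + p * t : ℕ) : ℤ)) ↔
              (p : ℤ) ∣ c + (t : ℤ) * f.derivative.eval (r : ℤ) := by
            rw [hcast t, hk, show f.eval (r : ℤ) + f.derivative.eval (r : ℤ) *
                ((p : ℤ) * t) + k * ((p : ℤ) * t) ^ 2 =
                (p : ℤ) * (c + (t : ℤ) * f.derivative.eval (r : ℤ)) +
                k * (p : ℤ) ^ 2 * (t : ℤ) ^ 2 by rw [hc]; ring,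
              aux_dvd_add_iff _ ⟨k * t ^ 2, by ring⟩, pow_two,
              mul_dvd_mul_iff_left hpz]
          rw [step1, ← ZMod.intCast_zmod_eq_zero_iff_dvd]
          push_cast
          rw [← hd]
          constructor
          · intro h
            have : (t : ZMod p) * d = -(c : ZMod p) := by linear_combination h
            rw [hu, ← this, mul_assoc, mul_inv_cancel₀ hdne, mul_one]
          · intro h
            rw [h, hu]
            field_simp
            ring
        have : (Finset.range p).filter
            (fun t : ℕ => (p : ℤ) ^ 2 ∣ f.eval ((r + p * t : ℕ) : ℤ)) = {u.val} := by
          ext t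
          simp only [Finset.mem_filter, Finset.mem_range, Finset.mem_singleton, hiff t]
          constructor
          · rintro ⟨htp, ht⟩
            rw [← ht, ZMod.val_cast_of_lt htp]
          · rintro rfl
            refine ⟨u.val_lt, ?_⟩
            simp [ZMod.natCast_val, ZMod.cast_id]
        rw [this]
        simp
    · -- no root mod p
      rw [if_neg (by tauto), if_neg (by tauto)]
      rw [Finset.filter_false_of_mem, Finset.card_empty]
      · simp
      intro t _ hdvd
      apply h1
      have hsub : (p : ℤ) ∣ f.eval ((r + p * t : ℕ) : ℤ) - f.eval (r : ℤ) := by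
        refine dvd_trans ⟨(t : ℤ), by rw [hcast t]; ring⟩
          (sub_dvd_eval_sub ((r + p * t : ℕ) : ℤ) (r : ℤ) f)
      have hpdvd : (p : ℤ) ∣ f.eval ((r + p * t : ℕ) : ℤ) :=
        dvd_trans ⟨(p : ℤ), (pow_two _)⟩ hdvd
      simpa using hpdvd.sub hsub
  -- Put it all together
  rw [hC, Finset.sum_congr rfl hD, Finset.sum_add_distrib, ← Finset.mul_sum]
  congr 1
  · rw [hA, hB, Finset.card_filter]
  · congr 1
    rw [Finset.card_filter]
end

section
/- Let f ∈ ℤ[x] be nonconstant, and suppose the reduction of f mod p factors as f₁·f₂²·...·f_ℓ^ℓ·g with fᵢ monic separable pairwise coprime products of linear factors and g rootless over ℤ/pℤ. Let ℒᵢ ∈ ℤ[x] be the lift of fᵢ with coefficients in {0,...,p−1} (as a product of lifted linear factors), g̃ the analogous lift of g, and t := reduction mod p of (1/p)(f − g̃·∏ℒᵢ^i). For r ∈ {0,...,p−1} a degenerate root of f mod p (so (x−r̄) divides f₂···f_ℓ), one has f(r) ≡ 0 mod p² if and only if t(r̄) = 0 in ℤ/pℤ. -/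
open Polynomial Finset

theorem stmt13 (p : ℕ) [Fact p.Prime] (f : Polynomial ℤ) (hf : 0 < f.natDegree)
    (ℓ : ℕ) (F : ℕ → Polynomial (ZMod p)) (g : Polynomial (ZMod p))
    (hfac : f.map (Int.castRingHom (ZMod p)) = (∏ i ∈ Finset.Icc 1 ℓ, F i ^ i) * g)
    (hmonic : ∀ i ∈ Finset.Icc 1 ℓ, (F i).Monic)
    (hsep : ∀ i ∈ Finset.Icc 1 ℓ, Squarefree (F i))
    (hsplit : ∀ i ∈ Finset.Icc 1 ℓ, ((F i).roots.card : ℕ) = (F i).natDegree)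
    (hcop : ∀ i ∈ Finset.Icc 1 ℓ, ∀ j ∈ Finset.Icc 1 ℓ, i ≠ j → IsCoprime (F i) (F j))
    (hg : ∀ r : ZMod p, g.eval r ≠ 0)
    (L : ℕ → Polynomial ℤ) (G : Polynomial ℤ)
    (hL : ∀ i ∈ Finset.Icc 1 ℓ, (L i).map (Int.castRingHom (ZMod p)) = F i)
    (hLcoeff : ∀ i ∈ Finset.Icc 1 ℓ, ∀ n, 0 ≤ (L i).coeff n ∧ (L i).coeff n ≤ (p : ℤ) - 1)
    (hG : G.map (Int.castRingHom (ZMod p)) = g)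
    (hGcoeff : ∀ n, 0 ≤ G.coeff n ∧ G.coeff n ≤ (p : ℤ) - 1)
    (T : Polynomial ℤ)
    (hT : f - G * ∏ i ∈ Finset.Icc 1 ℓ, L i ^ i = C (p : ℤ) * T)
    (r : ℤ) (hr0 : 0 ≤ r) (hr1 : r ≤ (p : ℤ) - 1)
    (hroot : (p : ℤ) ∣ f.eval r) (hder : (p : ℤ) ∣ f.derivative.eval r)
    (hdeg : (X - C ((r : ℤ) : ZMod p)) ∣ ∏ i ∈ Finset.Icc 2 ℓ, F i) :
    (p : ℤ) ^ 2 ∣ f.eval r ↔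
      (T.map (Int.castRingHom (ZMod p))).eval ((r : ℤ) : ZMod p) = 0 := by
  have hp0 : (p : ℤ) ≠ 0 := by
    exact_mod_cast (Fact.out : p.Prime).ne_zero
  -- degenerate root: some F i with 2 ≤ i has r as root
  have hroot2 : (∏ i ∈ Finset.Icc 2 ℓ, F i).eval ((r : ℤ) : ZMod p) = 0 := by
    have := (dvd_iff_isRoot.mp hdeg)
    simpa [IsRoot] using this
  rw [Polynomial.eval_prod] at hroot2
  obtain ⟨i, hi, hFi⟩ := Finset.prod_eq_zero_iff.mp hroot2
  have hi2 : 2 ≤ i := (Finset.mem_Icc.mp hi).1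
  have hi1 : i ∈ Finset.Icc 1 ℓ :=
    Finset.mem_Icc.mpr ⟨le_trans one_le_two hi2, (Finset.mem_Icc.mp hi).2⟩
  -- p ∣ (L i).eval r
  have hLi : (p : ℤ) ∣ (L i).eval r := by
    have : (((L i).eval r : ℤ) : ZMod p) = 0 := by
      have h1 : ((L i).map (Int.castRingHom (ZMod p))).eval ((r : ℤ) : ZMod p)
          = (((L i).eval r : ℤ) : ZMod p) := by
        rw [Polynomial.eval_map]
        exact (Polynomial.eval₂_at_apply _ r).trans rfl
      rw [hL i hi1] at h1
      rw [← h1, hFi]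
    exact_mod_cast (ZMod.intCast_zmod_eq_zero_iff_dvd _ _).mp this
  -- p^2 divides the product part
  have hP2 : (p : ℤ) ^ 2 ∣ (G * ∏ j ∈ Finset.Icc 1 ℓ, L j ^ j).eval r := by
    have h1 : (p : ℤ) ^ 2 ∣ ((L i).eval r) ^ i :=
      dvd_trans (pow_dvd_pow_of_dvd hLi 2) (pow_dvd_pow _ hi2)
    have h2 : ((L i).eval r) ^ i ∣ ∏ j ∈ Finset.Icc 1 ℓ, ((L j).eval r) ^ j :=
      Finset.dvd_prod_of_mem _ hi1
    have h3 := dvd_trans h1 h2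
    rw [Polynomial.eval_mul, Polynomial.eval_prod]
    simp only [Polynomial.eval_pow]
    exact Dvd.dvd.mul_left h3 _
  -- f(r) = product part + p * T(r)
  have heval : f.eval r = (G * ∏ j ∈ Finset.Icc 1 ℓ, L j ^ j).eval r + (p : ℤ) * T.eval r := by
    have := congrArg (Polynomial.eval r) hT
    simp only [Polynomial.eval_sub, Polynomial.eval_mul, Polynomial.eval_C] at this
    rw [Polynomial.eval_mul]
    linarith
  have key : (p : ℤ) ^ 2 ∣ f.eval r ↔ (p : ℤ) ∣ T.eval r := by
    rw [heval]
    constructor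
    · intro h
      have h4 : (p : ℤ) ^ 2 ∣ (p : ℤ) * T.eval r := by
        have := dvd_sub h hP2
        simpa using this
      rw [sq] at h4
      exact (mul_dvd_mul_iff_left hp0).mp h4
    · intro h
      obtain ⟨c, hc⟩ := h
      refine dvd_add hP2 ⟨c, ?_⟩
      rw [hc]; ring
  rw [key]
  have h1 : (T.map (Int.castRingHom (ZMod p))).eval ((r : ℤ) : ZMod p)
      = ((T.eval r : ℤ) : ZMod p) := by
    rw [Polynomial.eval_map]
    exact (Polynomial.eval₂_at_apply _ r).trans rfl
  rw [h1, ZMod.intCast_zmod_eq_zero_iff_dvd]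
end

section
/- Let f ∈ ℤ[x] be nonconstant with the setup of Definition 1.2: reduction h₁ = f₁f₂²···f_ℓ^ℓ·g mod p, lifts ℒᵢ ∈ ℤ[x] of fᵢ as products of lifted linear factors, t := π_p[(1/p)(f − g̃·∏ℒᵢ^i)], and h₂ := gcd(f₂···f_ℓ, t). Then #{a ∈ {0,...,p²−1} : f(a) ≡ 0 mod p²} = deg(f₁) + p·deg(h₂). -/
open Polynomial Finset

lemma aux_evalcast (p : ℕ) (q : Polynomial ℤ) (a : ℤ) :
    ((q.eval a : ℤ) : ZMod p) = (q.map (Int.castRingHom (ZMod p))).eval ((a : ZMod p)) := by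
  rw [eval_map]
  have := Polynomial.eval₂_at_apply (Int.castRingHom (ZMod p)) a (p := q)
  simpa using this.symm

lemma aux_cop_eval {K : Type*} [CommRing K] [Nontrivial K] {a b : Polynomial K} (h : IsCoprime a b) (x : K)
    (ha : a.eval x = 0) : b.eval x ≠ 0 := by
  obtain ⟨u, v, huv⟩ := h
  intro hb
  have := congrArg (Polynomial.eval x) huv
  simp [ha, hb] at this

lemma aux_rootcount {K : Type*} [Field K] [Fintype K] [DecidableEq K] {q : Polynomial K}
    (hq : q ≠ 0) (hs : q.Separable) (hc : (q.roots.card : ℕ) = q.natDegree) :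
    (Finset.univ.filter fun x => q.eval x = 0).card = q.natDegree := by
  have h : Finset.univ.filter (fun x => q.eval x = 0) = q.roots.toFinset := by
    ext x; simp [Polynomial.mem_roots, hq, IsRoot]
  rw [h, Multiset.toFinset_card_of_nodup (nodup_roots hs), hc]

lemma aux_div {K : Type*} [Field K] {P q : Polynomial K} (hP : P ≠ 0) (h : q ∣ P)
    (hc : (P.roots.card : ℕ) = P.natDegree) : (q.roots.card : ℕ) = q.natDegree := by
  obtain ⟨c, rfl⟩ := h
  have hq : q ≠ 0 := left_ne_zero_of_mul hP
  have hc0 : c ≠ 0 := right_ne_zero_of_mul hP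
  have h1 := Polynomial.roots_mul hP
  have h2 := Polynomial.natDegree_mul hq hc0
  have l1 := Polynomial.card_roots' q
  have l2 := Polynomial.card_roots' c
  have h3 := congrArg Multiset.card h1
  rw [Multiset.card_add] at h3
  omega
theorem stmt14 (p : ℕ) [Fact p.Prime] (f : Polynomial ℤ) (hf : 0 < f.natDegree)
    (hcoeff : ¬ ∀ n, (p : ℤ) ∣ f.coeff n)
    (ℓ : ℕ) (hℓ : 1 ≤ ℓ) (F : ℕ → Polynomial (ZMod p)) (g : Polynomial (ZMod p))
    (hfac : f.map (Int.castRingHom (ZMod p)) = (∏ i ∈ Finset.Icc 1 ℓ, F i ^ i) * g)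
    (hmonic : ∀ i ∈ Finset.Icc 1 ℓ, (F i).Monic)
    (hsep : ∀ i ∈ Finset.Icc 1 ℓ, Squarefree (F i))
    (hsplit : ∀ i ∈ Finset.Icc 1 ℓ, ((F i).roots.card : ℕ) = (F i).natDegree)
    (hcop : ∀ i ∈ Finset.Icc 1 ℓ, ∀ j ∈ Finset.Icc 1 ℓ, i ≠ j → IsCoprime (F i) (F j))
    (hg : ∀ r : ZMod p, g.eval r ≠ 0)
    (L : ℕ → Polynomial ℤ) (G : Polynomial ℤ)
    (hL : ∀ i ∈ Finset.Icc 1 ℓ, (L i).map (Int.castRingHom (ZMod p)) = F i)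
    (hLcoeff : ∀ i ∈ Finset.Icc 1 ℓ, ∀ n, 0 ≤ (L i).coeff n ∧ (L i).coeff n ≤ (p : ℤ) - 1)
    (hG : G.map (Int.castRingHom (ZMod p)) = g)
    (hGcoeff : ∀ n, 0 ≤ G.coeff n ∧ G.coeff n ≤ (p : ℤ) - 1)
    (T : Polynomial ℤ)
    (hT : f - G * ∏ i ∈ Finset.Icc 1 ℓ, L i ^ i = C (p : ℤ) * T) :
    ((Finset.range (p ^ 2)).filter (fun a : ℕ => (p : ℤ) ^ 2 ∣ f.eval (a : ℤ))).card =
      (F 1).natDegree +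
        p * (gcd (∏ i ∈ Finset.Icc 2 ℓ, F i)
              (T.map (Int.castRingHom (ZMod p)))).natDegree := by
  classical
  have hp : p.Prime := Fact.out
  haveI : NeZero p := ⟨hp.ne_zero⟩
  have hpne : (p : ℤ) ≠ 0 := by exact_mod_cast hp.ne_zero
  set φ := Int.castRingHom (ZMod p) with hφ
  have h1mem : (1 : ℕ) ∈ Finset.Icc 1 ℓ := by simp [Finset.mem_Icc]; omega
  have mem12 : ∀ i ∈ Finset.Icc 2 ℓ, i ∈ Finset.Icc 1 ℓ := by
    intro i hi; simp only [Finset.mem_Icc] at *; omega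
  have herase : (Finset.Icc 1 ℓ).erase 1 = Finset.Icc 2 ℓ := by
    ext a; simp only [Finset.mem_Icc, Finset.mem_erase]; omega
  have hFm : ∀ i ∈ Finset.Icc 1 ℓ, F i ≠ 0 := fun i hi => (hmonic i hi).ne_zero
  set Tb := T.map φ with hTbdef
  set P := ∏ i ∈ Finset.Icc 2 ℓ, F i with hPdef
  set N : ZMod p → ℕ := fun x =>
    if (F 1).eval x = 0 then 1 else if P.eval x = 0 ∧ Tb.eval x = 0 then p else 0 with hNdef
  -- the product decomposition
  have hh1R : f.map φ = F 1 * ((∏ i ∈ Finset.Icc 2 ℓ, F i ^ i) * g) := by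
    rw [hfac, ← Finset.mul_prod_erase _ _ h1mem, herase, pow_one, mul_assoc]
  -- coprime disjointness of roots
  have hdisj : ∀ x : ZMod p, (F 1).eval x = 0 → ∀ i ∈ Finset.Icc 2 ℓ, (F i).eval x ≠ 0 := by
    intro x hx i hi
    exact aux_cop_eval (hcop 1 h1mem i (mem12 i hi)
      (by simp only [Finset.mem_Icc] at hi; omega)) x hx
  -- key per-residue count
  have key : ∀ r : ℕ, ((Finset.range p).filter
      (fun s : ℕ => (p:ℤ)^2 ∣ f.eval ((r:ℤ) + (p:ℤ) * (s:ℤ)))).card = N (((r:ℤ) : ZMod p)) := by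
    intro r
    set x : ZMod p := ((r:ℤ) : ZMod p) with hxdef
    have hfr : ((f.eval (r:ℤ) : ℤ) : ZMod p) = (f.map φ).eval x := aux_evalcast p f r
    have hfr' : ((f.derivative.eval (r:ℤ) : ℤ) : ZMod p) = (derivative (f.map φ)).eval x := by
      rw [aux_evalcast p f.derivative r, ← derivative_map]
    by_cases hA : (F 1).eval x = 0
    · -- simple root of F 1 : exactly one lift
      have hNx : N x = 1 := by simp [hNdef, hA]
      have hRx : ((∏ i ∈ Finset.Icc 2 ℓ, F i ^ i) * g).eval x ≠ 0 := by
        rw [eval_mul, eval_prod]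
        refine mul_ne_zero (Finset.prod_ne_zero_iff.mpr fun i hi => ?_) (hg x)
        rw [eval_pow]
        exact pow_ne_zero _ (hdisj x hA i hi)
      have hsep1 : (F 1).Separable := (PerfectField.separable_iff_squarefree).mpr (hsep 1 h1mem)
      have hF1' : (derivative (F 1)).eval x ≠ 0 := aux_cop_eval hsep1 x hA
      have hdx : (derivative (f.map φ)).eval x ≠ 0 := by
        rw [hh1R, derivative_mul]
        simp only [eval_add, eval_mul, hA, zero_mul, add_zero]
        exact mul_ne_zero hF1' (by simpa [eval_mul] using hRx)
      have hpf : (p:ℤ) ∣ f.eval (r:ℤ) := by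
        rw [← ZMod.intCast_zmod_eq_zero_iff_dvd, hfr, hh1R, eval_mul, hA, zero_mul]
      obtain ⟨m, hm⟩ := hpf
      set d : ℤ := f.derivative.eval (r:ℤ) with hddef
      have hdz : ((d : ℤ) : ZMod p) ≠ 0 := by rw [hfr']; exact hdx
      set v : ZMod p := ((d:ℤ) : ZMod p)⁻¹ * (-((m:ℤ) : ZMod p)) with hvdef
      have hcond : ∀ s : ℕ, ((p:ℤ)^2 ∣ f.eval ((r:ℤ) + (p:ℤ)*(s:ℤ))) ↔ ((s : ZMod p) = v) := by
        intro s
        obtain ⟨k, hk⟩ := f.binomExpansion (r:ℤ) ((p:ℤ)*(s:ℤ))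
        have hrw : f.eval ((r:ℤ) + (p:ℤ)*(s:ℤ)) = (p:ℤ)*(m + d*s) + (k*s^2) * (p:ℤ)^2 := by
          rw [hk, hm]; ring
        rw [hrw, dvd_add_left (dvd_mul_left _ _), pow_two,
          mul_dvd_mul_iff_left hpne, ← ZMod.intCast_zmod_eq_zero_iff_dvd]
        push_cast
        constructor
        · intro h
          have hds : ((d:ℤ) : ZMod p) * (s : ZMod p) = -((m:ℤ) : ZMod p) :=
            eq_neg_of_add_eq_zero_right (by linear_combination h)
          calc (s : ZMod p) = ((d:ℤ):ZMod p)⁻¹ * (((d:ℤ):ZMod p) * (s:ZMod p)) := by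
                rw [← mul_assoc, inv_mul_cancel₀ hdz, one_mul]
            _ = v := by rw [hds, hvdef]
        · intro h
          rw [h, hvdef, ← mul_assoc, mul_inv_cancel₀ hdz, one_mul]
          ring
      have hfilt : (Finset.range p).filter
          (fun s : ℕ => (p:ℤ)^2 ∣ f.eval ((r:ℤ) + (p:ℤ)*(s:ℤ))) = {v.val} := by
        ext s
        simp only [Finset.mem_filter, Finset.mem_range, Finset.mem_singleton, hcond s]
        constructor
        · rintro ⟨hs, hv⟩
          rw [← hv, ZMod.val_cast_of_lt hs]
        · rintro rfl
          refine ⟨ZMod.val_lt v, ?_⟩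
          simp [ZMod.natCast_val, ZMod.cast_id]
      rw [hfilt, hNx, Finset.card_singleton]
    by_cases hB : P.eval x = 0
    · -- multiple root case
      obtain ⟨j, hj, hFj⟩ : ∃ j ∈ Finset.Icc 2 ℓ, (F j).eval x = 0 := by
        rw [hPdef, eval_prod] at hB
        exact Finset.prod_eq_zero_iff.mp hB
      have hj1 : j ∈ Finset.Icc 1 ℓ := mem12 j hj
      have hj2 : 2 ≤ j := (Finset.mem_Icc.mp hj).1
      have hdvd2 : F j ^ 2 ∣ f.map φ := by
        rw [hfac]
        have hd1 : F j ^ 2 ∣ F j ^ j := pow_dvd_pow _ hj2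
        have hd2 : F j ^ j ∣ ∏ i ∈ Finset.Icc 1 ℓ, F i ^ i :=
          Finset.dvd_prod_of_mem (fun i => F i ^ i) hj1
        exact dvd_mul_of_dvd_left (hd1.trans hd2) _
      obtain ⟨c, hc⟩ := hdvd2
      have hd0 : (derivative (f.map φ)).eval x = 0 := by
        rw [hc, derivative_mul, derivative_pow]
        simp [hFj]
      have hpd : (p:ℤ) ∣ f.derivative.eval (r:ℤ) := by
        rw [← ZMod.intCast_zmod_eq_zero_iff_dvd, hfr', hd0]
      have hTev : f.eval (r:ℤ) =
          G.eval (r:ℤ) * ∏ i ∈ Finset.Icc 1 ℓ, ((L i).eval (r:ℤ)) ^ i + (p:ℤ) * T.eval (r:ℤ) := by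
        have h := congrArg (Polynomial.eval (r:ℤ)) hT
        simp only [eval_sub, eval_mul, eval_prod, eval_pow, eval_C] at h
        linarith
      have hpLj : (p:ℤ) ∣ (L j).eval (r:ℤ) := by
        rw [← ZMod.intCast_zmod_eq_zero_iff_dvd, aux_evalcast, hL j hj1]
        exact hFj
      have hp2prod : (p:ℤ)^2 ∣ G.eval (r:ℤ) * ∏ i ∈ Finset.Icc 1 ℓ, ((L i).eval (r:ℤ)) ^ i := by
        refine Dvd.dvd.mul_left ?_ _
        rw [← Finset.mul_prod_erase _ _ hj1]
        refine Dvd.dvd.mul_right ?_ _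
        exact dvd_trans (pow_dvd_pow _ hj2) (pow_dvd_pow_of_dvd hpLj _)
      have hfriff : ((p:ℤ)^2 ∣ f.eval (r:ℤ)) ↔ Tb.eval x = 0 := by
        rw [hTev, dvd_add_right hp2prod, pow_two, mul_dvd_mul_iff_left hpne,
          ← ZMod.intCast_zmod_eq_zero_iff_dvd, aux_evalcast]
      have hiff2 : ∀ s : ℕ, ((p:ℤ)^2 ∣ f.eval ((r:ℤ) + (p:ℤ)*(s:ℤ))) ↔ ((p:ℤ)^2 ∣ f.eval (r:ℤ)) := by
        intro s
        obtain ⟨k, hk⟩ := f.binomExpansion (r:ℤ) ((p:ℤ)*(s:ℤ))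
        obtain ⟨e, he⟩ := hpd
        have hrw : f.eval ((r:ℤ) + (p:ℤ)*(s:ℤ)) = f.eval (r:ℤ) + (e*s + k*s^2) * (p:ℤ)^2 := by
          rw [hk, he]; ring
        rw [hrw, dvd_add_left (dvd_mul_left _ _)]
      by_cases hTx : Tb.eval x = 0
      · have hfilt : (Finset.range p).filter
            (fun s : ℕ => (p:ℤ)^2 ∣ f.eval ((r:ℤ) + (p:ℤ)*(s:ℤ))) = Finset.range p := by
          refine Finset.filter_true_of_mem fun s _ => ?_
          rw [hiff2 s, hfriff]; exact hTx
        rw [hfilt, Finset.card_range]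
        simp [hNdef, hA, hB, hTx]
      · have hfilt : (Finset.range p).filter
            (fun s : ℕ => (p:ℤ)^2 ∣ f.eval ((r:ℤ) + (p:ℤ)*(s:ℤ))) = ∅ := by
          refine Finset.filter_false_of_mem fun s _ => ?_
          rw [hiff2 s, hfriff]; exact hTx
        rw [hfilt, Finset.card_empty]
        simp [hNdef, hA, hB, hTx]
    · -- no root at all
      have hh1x : (f.map φ).eval x ≠ 0 := by
        rw [hfac, eval_mul, eval_prod]
        refine mul_ne_zero (Finset.prod_ne_zero_iff.mpr fun i hi => ?_) (hg x)
        rw [eval_pow]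
        refine pow_ne_zero _ ?_
        rcases eq_or_ne i 1 with rfl | hne
        · exact hA
        · have hi2 : i ∈ Finset.Icc 2 ℓ := by
            simp only [Finset.mem_Icc] at hi ⊢; omega
          have := hB
          rw [hPdef, eval_prod] at this
          exact fun h0 => this (Finset.prod_eq_zero hi2 h0)
      have hfilt : (Finset.range p).filter
          (fun s : ℕ => (p:ℤ)^2 ∣ f.eval ((r:ℤ) + (p:ℤ)*(s:ℤ))) = ∅ := by
        refine Finset.filter_false_of_mem fun s _ => ?_
        intro hdvd
        apply hh1x
        have hp1 : (p:ℤ) ∣ f.eval ((r:ℤ) + (p:ℤ)*(s:ℤ)) :=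
          dvd_trans (dvd_pow_self (p:ℤ) two_ne_zero) hdvd
        have h0 := (ZMod.intCast_zmod_eq_zero_iff_dvd _ p).mpr hp1
        rw [aux_evalcast] at h0
        have hxx : (((r:ℤ) + (p:ℤ)*(s:ℤ) : ℤ) : ZMod p) = x := by
          rw [hxdef]
          push_cast [ZMod.natCast_self]
          ring
        rwa [hxx] at h0
      rw [hfilt, Finset.card_empty]
      simp [hNdef, hA, hB]

  -- bijection between range (p^2) and pairs (r,s)
  have hbij : ((Finset.range (p ^ 2)).filter (fun a : ℕ => (p : ℤ) ^ 2 ∣ f.eval (a : ℤ))).card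
      = ((Finset.range p ×ˢ Finset.range p).filter
          (fun rs : ℕ × ℕ => (p:ℤ)^2 ∣ f.eval ((rs.1:ℤ) + (p:ℤ) * (rs.2:ℤ)))).card := by
    refine Finset.card_bij' (fun a _ => (a % p, a / p)) (fun rs _ => rs.1 + p * rs.2)
      ?_ ?_ ?_ ?_
    · intro a ha
      rw [Finset.mem_filter, Finset.mem_range] at ha
      obtain ⟨halt, hadvd⟩ := ha
      rw [Finset.mem_filter, Finset.mem_product, Finset.mem_range, Finset.mem_range]
      have hcast : ((a % p : ℕ) : ℤ) + (p:ℤ) * ((a / p : ℕ) : ℤ) = (a : ℤ) := by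
        exact_mod_cast congrArg (Nat.cast : ℕ → ℤ) (Nat.mod_add_div a p)
      refine ⟨⟨Nat.mod_lt _ hp.pos, ?_⟩, by rw [hcast]; exact hadvd⟩
      rw [Nat.div_lt_iff_lt_mul hp.pos]
      rwa [pow_two] at halt
    · intro rs hrs
      rw [Finset.mem_filter, Finset.mem_product, Finset.mem_range, Finset.mem_range] at hrs
      obtain ⟨⟨hr, hs⟩, hdvd⟩ := hrs
      rw [Finset.mem_filter, Finset.mem_range]
      constructor
      · calc rs.1 + p * rs.2 < p + p * rs.2 := by omega
          _ = p * (rs.2 + 1) := by ring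
          _ ≤ p * p := Nat.mul_le_mul_left p hs
          _ = p ^ 2 := (pow_two p).symm
      · have hcast : ((rs.1 + p * rs.2 : ℕ) : ℤ) = (rs.1 : ℤ) + (p:ℤ) * (rs.2 : ℤ) := by
          push_cast; ring
        rw [hcast]; exact hdvd
    · intro a ha
      exact Nat.mod_add_div a p
    · intro rs hrs
      rw [Finset.mem_filter, Finset.mem_product, Finset.mem_range, Finset.mem_range] at hrs
      obtain ⟨⟨hr, hs⟩, -⟩ := hrs
      have h1 : (rs.1 + p * rs.2) % p = rs.1 := by
        rw [Nat.add_mul_mod_self_left, Nat.mod_eq_of_lt hr]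
      have h2 : (rs.1 + p * rs.2) / p = rs.2 := by
        rw [Nat.add_mul_div_left _ _ hp.pos, Nat.div_eq_of_lt hr, zero_add]
      show ((rs.1 + p * rs.2) % p, (rs.1 + p * rs.2) / p) = rs
      rw [h1, h2]
  have hprod : ((Finset.range p ×ˢ Finset.range p).filter
          (fun rs : ℕ × ℕ => (p:ℤ)^2 ∣ f.eval ((rs.1:ℤ) + (p:ℤ) * (rs.2:ℤ)))).card
      = ∑ r ∈ Finset.range p, ((Finset.range p).filter
          (fun s : ℕ => (p:ℤ)^2 ∣ f.eval ((r:ℤ) + (p:ℤ) * (s:ℤ)))).card := by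
    rw [Finset.card_filter, Finset.sum_product]
    exact Finset.sum_congr rfl fun r _ => (Finset.card_filter _ _).symm
  have hsum2 : ∑ r ∈ Finset.range p, N (((r:ℤ)) : ZMod p) = ∑ x : ZMod p, N x := by
    refine Finset.sum_nbij' (fun r : ℕ => (((r:ℤ)) : ZMod p)) (fun x : ZMod p => x.val)
      (fun a _ => Finset.mem_univ _) (fun x _ => Finset.mem_range.mpr (ZMod.val_lt x))
      ?_ ?_ (fun a _ => rfl)
    · intro r hr
      show ((((r:ℤ)) : ZMod p)).val = r
      have h : (((r:ℤ)) : ZMod p) = ((r:ℕ) : ZMod p) := by push_cast; rfl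
      rw [h, ZMod.val_cast_of_lt (Finset.mem_range.mp hr)]
    · intro x _
      show ((((x.val : ℕ) : ℤ)) : ZMod p) = x
      have h : (((x.val : ℤ)) : ZMod p) = ((x.val : ℕ) : ZMod p) := by push_cast; rfl
      rw [h, ZMod.natCast_val, ZMod.cast_id]
  have hNsum : ∑ x : ZMod p, N x = (F 1).natDegree + p * (gcd P Tb).natDegree := by
    have hNeq : ∀ x : ZMod p, N x =
        (if (F 1).eval x = 0 then 1 else 0) + (if P.eval x = 0 ∧ Tb.eval x = 0 then p else 0) := by
      intro x
      by_cases hA : (F 1).eval x = 0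
      · have hnB : ¬ (P.eval x = 0 ∧ Tb.eval x = 0) := by
          rintro ⟨hPx, -⟩
          rw [hPdef, eval_prod] at hPx
          obtain ⟨j, hj, hFj⟩ := Finset.prod_eq_zero_iff.mp hPx
          exact hdisj x hA j hj hFj
        simp [hNdef, hA, hnB]
      · simp [hNdef, hA]
    rw [Finset.sum_congr rfl fun x _ => hNeq x, Finset.sum_add_distrib]
    have hPmonic : P.Monic := by
      rw [hPdef]
      exact Polynomial.monic_prod_of_monic _ _ (fun i hi => hmonic i (mem12 i hi))
    have hPne : P ≠ 0 := hPmonic.ne_zero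
    have hProots : (Multiset.card P.roots : ℕ) = P.natDegree := by
      rw [hPdef, Polynomial.roots_prod _ _ (by rw [← hPdef]; exact hPne), Multiset.card_bind,
        Polynomial.natDegree_prod _ _ (fun i hi => hFm i (mem12 i hi))]
      exact Finset.sum_congr rfl fun i hi => hsplit i (mem12 i hi)
    have hPsep : P.Separable := by
      rw [hPdef]
      exact Polynomial.separable_prod'
        (fun i hi j hj hij => hcop i (mem12 i hi) j (mem12 j hj) hij)
        (fun i hi => (PerfectField.separable_iff_squarefree).mpr (hsep i (mem12 i hi)))
    have hgcdne : gcd P Tb ≠ 0 := fun h => hPne ((gcd_eq_zero_iff P Tb).mp h).1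
    have hgcdsep : (gcd P Tb).Separable := hPsep.of_dvd (gcd_dvd_left P Tb)
    have hgcdroots : (Multiset.card (gcd P Tb).roots : ℕ) = (gcd P Tb).natDegree :=
      aux_div hPne (gcd_dvd_left P Tb) hProots
    have hgcdev : ∀ x : ZMod p, ((gcd P Tb).eval x = 0 ↔ P.eval x = 0 ∧ Tb.eval x = 0) := by
      intro x
      constructor
      · intro h
        obtain ⟨c1, hc1⟩ := gcd_dvd_left P Tb
        obtain ⟨c2, hc2⟩ := gcd_dvd_right P Tb
        exact ⟨by rw [hc1, eval_mul, h, zero_mul], by rw [hc2, eval_mul, h, zero_mul]⟩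
      · rintro ⟨h1x, h2x⟩
        obtain ⟨c, hc⟩ := dvd_gcd (dvd_iff_isRoot.mpr h1x) (dvd_iff_isRoot.mpr h2x)
        rw [hc, eval_mul, eval_sub, eval_X, eval_C, sub_self, zero_mul]
    congr 1
    · rw [← Finset.card_filter]
      exact aux_rootcount (hFm 1 h1mem)
        ((PerfectField.separable_iff_squarefree).mpr (hsep 1 h1mem)) (hsplit 1 h1mem)
    · rw [Finset.sum_congr rfl fun x _ =>
        (if_congr (hgcdev x).symm rfl rfl :
          (if P.eval x = 0 ∧ Tb.eval x = 0 then p else 0)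
            = (if (gcd P Tb).eval x = 0 then p else 0)),
        ← Finset.sum_filter, Finset.sum_const, smul_eq_mul,
        aux_rootcount hgcdne hgcdsep hgcdroots, mul_comm]
  calc ((Finset.range (p ^ 2)).filter (fun a : ℕ => (p : ℤ) ^ 2 ∣ f.eval (a : ℤ))).card
      = ((Finset.range p ×ˢ Finset.range p).filter
          (fun rs : ℕ × ℕ => (p:ℤ)^2 ∣ f.eval ((rs.1:ℤ) + (p:ℤ) * (rs.2:ℤ)))).card := hbij
    _ = ∑ r ∈ Finset.range p, ((Finset.range p).filter
          (fun s : ℕ => (p:ℤ)^2 ∣ f.eval ((r:ℤ) + (p:ℤ) * (s:ℤ)))).card := hprod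
    _ = ∑ r ∈ Finset.range p, N (((r:ℤ)) : ZMod p) := Finset.sum_congr rfl fun r _ => key r
    _ = ∑ x : ZMod p, N x := hsum2
    _ = (F 1).natDegree + p * (gcd P Tb).natDegree := hNsum
end

section
/- With the setup of the main theorem, exactly deg(f₂···f_ℓ) − deg(h₂) degenerate roots of f mod p fail to lift to roots of f mod p²; i.e., #{a ∈ {0,...,p−1} : (f₂···f_ℓ)(ā) = 0 in ℤ/pℤ and f(a) ≢ 0 mod p²} = deg(f₂···f_ℓ) − deg(h₂). -/
open Polynomial Finset

set_option maxHeartbeats 1000000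

theorem stmt15 (p : ℕ) [Fact p.Prime] (f : Polynomial ℤ) (hf : 0 < f.natDegree)
    (hcoeff : ¬ ∀ n, (p : ℤ) ∣ f.coeff n)
    (ℓ : ℕ) (hℓ : 1 ≤ ℓ) (F : ℕ → Polynomial (ZMod p)) (g : Polynomial (ZMod p))
    (hfac : f.map (Int.castRingHom (ZMod p)) = (∏ i ∈ Finset.Icc 1 ℓ, F i ^ i) * g)
    (hmonic : ∀ i ∈ Finset.Icc 1 ℓ, (F i).Monic)
    (hsep : ∀ i ∈ Finset.Icc 1 ℓ, Squarefree (F i))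
    (hsplit : ∀ i ∈ Finset.Icc 1 ℓ, ((F i).roots.card : ℕ) = (F i).natDegree)
    (hcop : ∀ i ∈ Finset.Icc 1 ℓ, ∀ j ∈ Finset.Icc 1 ℓ, i ≠ j → IsCoprime (F i) (F j))
    (hg : ∀ r : ZMod p, g.eval r ≠ 0)
    (L : ℕ → Polynomial ℤ) (G : Polynomial ℤ)
    (hL : ∀ i ∈ Finset.Icc 1 ℓ, (L i).map (Int.castRingHom (ZMod p)) = F i)
    (hLcoeff : ∀ i ∈ Finset.Icc 1 ℓ, ∀ n, 0 ≤ (L i).coeff n ∧ (L i).coeff n ≤ (p : ℤ) - 1)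
    (hG : G.map (Int.castRingHom (ZMod p)) = g)
    (hGcoeff : ∀ n, 0 ≤ G.coeff n ∧ G.coeff n ≤ (p : ℤ) - 1)
    (T : Polynomial ℤ)
    (hT : f - G * ∏ i ∈ Finset.Icc 1 ℓ, L i ^ i = C (p : ℤ) * T) :
    ((Finset.range p).filter (fun a : ℕ =>
        (∏ i ∈ Finset.Icc 2 ℓ, F i).eval ((a : ℤ) : ZMod p) = 0 ∧
          ¬ (p : ℤ) ^ 2 ∣ f.eval (a : ℤ))).card =
      (∏ i ∈ Finset.Icc 2 ℓ, F i).natDegree -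
        (gcd (∏ i ∈ Finset.Icc 2 ℓ, F i)
          (T.map (Int.castRingHom (ZMod p)))).natDegree := by
  have hp : 0 < p := (Fact.out : p.Prime).pos
  set φ := Int.castRingHom (ZMod p) with hφ
  set P : Polynomial (ZMod p) := ∏ i ∈ Finset.Icc 2 ℓ, F i with hPdef
  set Tb : Polynomial (ZMod p) := T.map φ with hTbdef
  set D : Polynomial (ZMod p) := gcd P Tb with hDdef
  have hsub : Finset.Icc 2 ℓ ⊆ Finset.Icc 1 ℓ := fun i hi => by
    simp only [Finset.mem_Icc] at *; omega
  have hPmonic : P.Monic := monic_prod_of_monic _ _ fun i hi => hmonic i (hsub hi)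
  have hPne : P ≠ 0 := hPmonic.ne_zero
  have hFne : ∀ i ∈ Finset.Icc 2 ℓ, F i ≠ 0 := fun i hi => (hmonic i (hsub hi)).ne_zero
  -- roots of P
  have hProots : P.roots = (Finset.Icc 2 ℓ).val.bind fun i => (F i).roots :=
    roots_prod _ _ hPne
  -- nodup roots of each F i
  have hnodupF : ∀ i ∈ Finset.Icc 1 ℓ, (F i).roots.Nodup := by
    intro i hi
    rw [Multiset.nodup_iff_count_le_one]
    intro r
    by_contra hcount
    push_neg at hcount
    have h2 : 2 ≤ rootMultiplicity r (F i) := by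
      rw [← count_roots]; omega
    have hdvd : (X - C r) * (X - C r) ∣ F i := by
      rw [← sq]
      exact dvd_trans (pow_dvd_pow _ h2) (pow_rootMultiplicity_dvd _ _)
    exact (not_isUnit_X_sub_C r) ((hsep i hi) _ hdvd)
  -- disjointness of roots of distinct factors
  have hdisj : ∀ i ∈ Finset.Icc 1 ℓ, ∀ j ∈ Finset.Icc 1 ℓ, i ≠ j →
      ∀ r : ZMod p, (F i).eval r = 0 → (F j).eval r = 0 → False := by
    intro i hi j hj hij r hri hrj
    obtain ⟨u, v, huv⟩ := hcop i hi j hj hij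
    have := congrArg (Polynomial.eval r) huv
    simp [hri, hrj] at this
  have hPnodup : P.roots.Nodup := by
    rw [hProots, Multiset.nodup_bind]
    constructor
    · exact fun i hi => hnodupF i (hsub hi)
    · refine Multiset.Nodup.pairwise ?_ (Finset.Icc 2 ℓ).nodup
      intro i hi j hj hij
      simp only [Function.onFun]
      rw [Multiset.disjoint_left]
      intro r hri hrj
      rw [mem_roots (hFne i hi)] at hri
      rw [mem_roots (hFne j hj)] at hrj
      exact hdisj i (hsub hi) j (hsub hj) hij r hri hrj
  -- card of roots of P
  have hPcard : P.roots.card = P.natDegree := by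
    have h1 : P.roots.card = ∑ i ∈ Finset.Icc 2 ℓ, ((F i).roots).card := by
      rw [hProots, Multiset.card_bind]
      rfl
    rw [h1, hPdef, natDegree_prod _ _ hFne]
    exact Finset.sum_congr rfl fun i hi => hsplit i (hsub hi)
  have hPsplits : Splits P := splits_iff_card_roots.mpr hPcard
  have hDdvdP : D ∣ P := gcd_dvd_left P Tb
  have hDdvdT : D ∣ Tb := gcd_dvd_right P Tb
  have hDne : D ≠ 0 := by
    intro h
    rw [h] at hDdvdP
    exact hPne (zero_dvd_iff.mp hDdvdP)
  have hDsplits : Splits D :=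
    hPsplits.of_dvd hPne hDdvdP
  have hDcard : D.roots.card = D.natDegree := splits_iff_card_roots.mp hDsplits
  have hDnodup : D.roots.Nodup :=
    Multiset.nodup_of_le (Polynomial.roots.le_of_dvd hPne hDdvdP) hPnodup
  -- root characterization of D
  have hDroot : ∀ r : ZMod p, D.eval r = 0 ↔ P.eval r = 0 ∧ Tb.eval r = 0 := by
    intro r
    constructor
    · intro hr
      obtain ⟨c, hc⟩ := hDdvdP
      obtain ⟨d, hd⟩ := hDdvdT
      exact ⟨by rw [hc, eval_mul, hr, zero_mul], by rw [hd, eval_mul, hr, zero_mul]⟩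
    · rintro ⟨h1, h2⟩
      have hx : X - C r ∣ D :=
        dvd_gcd (dvd_iff_isRoot.mpr h1) (dvd_iff_isRoot.mpr h2)
      exact dvd_iff_isRoot.mp hx
  -- the key lifting criterion
  have key : ∀ a : ℤ, P.eval ((a : ZMod p)) = 0 →
      ((p : ℤ) ^ 2 ∣ f.eval a ↔ Tb.eval ((a : ZMod p)) = 0) := by
    intro a hPa
    obtain ⟨i, hi, hFi⟩ : ∃ i ∈ Finset.Icc 2 ℓ, (F i).eval ((a : ZMod p)) = 0 := by
      rw [hPdef, eval_prod] at hPa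
      exact Finset.prod_eq_zero_iff.mp hPa
    have hLi : (p : ℤ) ∣ (L i).eval a := by
      rw [← ZMod.intCast_zmod_eq_zero_iff_dvd]
      have h1 := eval_intCast_map φ (L i) a
      rw [hL i (hsub hi), hFi] at h1
      exact h1.symm
    have h2i : 2 ≤ i := (Finset.mem_Icc.mp hi).1
    have hpow : (p : ℤ) ^ 2 ∣ ((L i).eval a) ^ i :=
      dvd_trans (pow_dvd_pow_of_dvd hLi 2) (pow_dvd_pow _ h2i)
    have hprod : (p : ℤ) ^ 2 ∣ G.eval a * (∏ j ∈ Finset.Icc 1 ℓ, L j ^ j).eval a := by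
      rw [eval_prod]
      refine Dvd.dvd.mul_left ?_ _
      refine dvd_trans hpow ?_
      have : ((L i) ^ i).eval a = ((L i).eval a) ^ i := by rw [eval_pow]
      rw [← this]
      exact Finset.dvd_prod_of_mem _ (hsub hi)
    have heq : f.eval a = G.eval a * (∏ j ∈ Finset.Icc 1 ℓ, L j ^ j).eval a
        + (p : ℤ) * T.eval a := by
      have := congrArg (Polynomial.eval a) hT
      simp only [eval_sub, eval_mul, eval_C] at this
      linarith
    rw [heq, dvd_add_right hprod, sq, mul_dvd_mul_iff_left (by exact_mod_cast hp.ne' : (p:ℤ) ≠ 0)]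
    have hTcast : ((T.eval a : ℤ) : ZMod p) = Tb.eval ((a : ZMod p)) := by
      have h1 := eval_intCast_map φ T a
      rw [← hTbdef] at h1
      exact h1.symm
    rw [← ZMod.intCast_zmod_eq_zero_iff_dvd, hTcast]
  -- counting
  have hbij : ((Finset.range p).filter (fun a : ℕ =>
        P.eval ((a : ℤ) : ZMod p) = 0 ∧ ¬ (p : ℤ) ^ 2 ∣ f.eval (a : ℤ))).card =
      (Finset.univ.filter (fun r : ZMod p => P.eval r = 0 ∧ Tb.eval r ≠ 0)).card := by
    haveI : NeZero p := ⟨hp.ne'⟩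
    refine Finset.card_bij (fun a _ => ((a : ℤ) : ZMod p)) ?_ ?_ ?_
    · intro a ha
      rw [Finset.mem_filter] at ha ⊢
      obtain ⟨-, h1, h2⟩ := ha
      refine ⟨Finset.mem_univ _, h1, fun hT0 => h2 ((key a h1).mpr hT0)⟩
    · intro a ha b hb hab
      rw [Finset.mem_filter, Finset.mem_range] at ha hb
      have hab' : ((a : ℕ) : ZMod p) = ((b : ℕ) : ZMod p) := by
        push_cast at hab ⊢
        exact hab
      have := congrArg ZMod.val hab'
      rwa [ZMod.val_natCast_of_lt ha.1, ZMod.val_natCast_of_lt hb.1] at this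
    · intro r hr
      rw [Finset.mem_filter] at hr
      have hcast : (((r.val : ℕ) : ℤ) : ZMod p) = r := by
        push_cast
        exact ZMod.natCast_rightInverse r
      refine ⟨r.val, ?_, hcast⟩
      rw [Finset.mem_filter, Finset.mem_range]
      refine ⟨ZMod.val_lt r, ?_, ?_⟩
      · rw [hcast]; exact hr.2.1
      · intro hdvd
        have := (key (r.val : ℤ) (by rw [hcast]; exact hr.2.1)).mp hdvd
        rw [hcast] at this
        exact hr.2.2 this
  rw [hbij]
  -- card of the filtered set in ZMod p
  have hS : Finset.univ.filter (fun r : ZMod p => P.eval r = 0) = P.roots.toFinset := by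
    ext r
    simp [mem_roots hPne, IsRoot]
  have hS0 : Finset.univ.filter (fun r : ZMod p => P.eval r = 0 ∧ Tb.eval r = 0)
      = D.roots.toFinset := by
    ext r
    simp only [Finset.mem_filter, Finset.mem_univ, true_and, Multiset.mem_toFinset,
      mem_roots hDne, IsRoot]
    exact (hDroot r).symm
  have hsubset : Finset.univ.filter (fun r : ZMod p => P.eval r = 0 ∧ Tb.eval r = 0)
      ⊆ Finset.univ.filter (fun r : ZMod p => P.eval r = 0) := by
    intro r hr
    rw [Finset.mem_filter] at hr ⊢
    exact ⟨hr.1, hr.2.1⟩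
  have hAs : Finset.univ.filter (fun r : ZMod p => P.eval r = 0 ∧ Tb.eval r ≠ 0)
      = (Finset.univ.filter fun r : ZMod p => P.eval r = 0) \
        (Finset.univ.filter fun r : ZMod p => P.eval r = 0 ∧ Tb.eval r = 0) := by
    ext r
    simp only [Finset.mem_sdiff, Finset.mem_filter, Finset.mem_univ, true_and]
    tauto
  rw [hAs, Finset.card_sdiff_of_subset hsubset, hS, hS0, Multiset.toFinset_card_of_nodup hPnodup,
    Multiset.toFinset_card_of_nodup hDnodup, hPcard, hDcard]
end

section
/- Let f ∈ ℤ[x] be nonconstant with not all coefficients divisible by p. Then the number of roots of f mod p² in ℤ/p²ℤ is at least n₁ and at most n₁ + p·n₂, where n₁ is the number of simple roots and n₂ the number of degenerate roots of f mod p in ℤ/pℤ. -/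
open Polynomial

lemma aux_red (n : ℕ) (g : Polynomial ℤ) (a : ℤ) :
    Polynomial.aeval ((a : ZMod n)) g = ((g.eval a : ℤ) : ZMod n) := by
  rw [aeval_def, eval₂_eq_eval_map,
    show (algebraMap ℤ (ZMod n)) = Int.castRingHom (ZMod n) from rfl]
  exact eval_intCast_map _ _ _

lemma aux_dvd_iff (n : ℕ) (g : Polynomial ℤ) (a : ℤ) :
    (n : ℤ) ∣ g.eval a ↔ Polynomial.aeval ((a : ZMod n)) g = 0 := by
  rw [aux_red, ZMod.intCast_zmod_eq_zero_iff_dvd]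

lemma aux_unique (p : ℕ) (hp : p.Prime) (f : Polynomial ℤ) (x y : ℤ)
    (hxy : (p : ℤ) ∣ y - x) (hx : (p:ℤ)^2 ∣ f.eval x) (hy : (p:ℤ)^2 ∣ f.eval y)
    (hd : ¬ (p:ℤ) ∣ f.derivative.eval x) : (p:ℤ)^2 ∣ y - x := by
  obtain ⟨t, ht⟩ := hxy
  obtain ⟨k, hk⟩ := f.binomExpansion x ((p:ℤ) * t)
  have hy' : y = x + (p:ℤ) * t := by linarith
  rw [hy', hk] at hy
  have h1 : (p:ℤ)^2 ∣ f.derivative.eval x * ((p:ℤ)*t) + k * ((p:ℤ)*t)^2 :=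
    (dvd_add_right hx).mp (by rwa [add_assoc] at hy)
  have h2 : (p:ℤ) * (p:ℤ) ∣ (p:ℤ) * (f.derivative.eval x * t + k * (p * t^2)) := by
    rw [show (p:ℤ) * (f.derivative.eval x * t + k * (p * t^2))
        = f.derivative.eval x * ((p:ℤ)*t) + k * ((p:ℤ)*t)^2 by ring]
    rw [← sq]; exact h1
  have h3 : (p:ℤ) ∣ f.derivative.eval x * t + k * (p * t^2) :=
    (mul_dvd_mul_iff_left (by exact_mod_cast hp.ne_zero : (p:ℤ) ≠ 0)).mp h2
  have h4 : (p:ℤ) ∣ f.derivative.eval x * t := by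
    have h := dvd_sub h3 (Dvd.intro _ rfl : (p:ℤ) ∣ p * (k * t^2))
    rwa [show f.derivative.eval x * t + k * (p * t^2) - p * (k * t^2)
          = f.derivative.eval x * t by ring] at h
  have hpprime : Prime (p:ℤ) := Nat.prime_iff_prime_int.mp hp
  have h5 : (p:ℤ) ∣ t := ((hpprime.dvd_mul.mp h4).resolve_left hd)
  obtain ⟨s, hs⟩ := h5
  exact ⟨s, by rw [ht, hs]; ring⟩

lemma aux_exists (p : ℕ) (hp : p.Prime) (f : Polynomial ℤ) (x : ℤ)
    (hx : (p:ℤ) ∣ f.eval x) (hd : ¬ (p:ℤ) ∣ f.derivative.eval x) :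
    ∃ t : ℤ, (p:ℤ)^2 ∣ f.eval (x + t * p) := by
  have hpprime : Prime (p:ℤ) := Nat.prime_iff_prime_int.mp hp
  have hcop : IsCoprime (p:ℤ) (f.derivative.eval x) :=
    (hpprime.coprime_iff_not_dvd).mpr hd
  obtain ⟨u, v, huv⟩ := hcop
  obtain ⟨c, hc⟩ := hx
  refine ⟨-(c * v), ?_⟩
  obtain ⟨k, hk⟩ := f.binomExpansion x (-(c * v) * p)
  rw [hk]
  refine ⟨c * u + k * (c * v)^2, ?_⟩
  rw [hc]
  linear_combination (-(p:ℤ) * c) * huv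

theorem stmt18 (p : ℕ) (hp : p.Prime) (f : Polynomial ℤ)
    (hf : 0 < f.natDegree)
    (hcoeff : ¬ ∀ n, (p : ℤ) ∣ f.coeff n) :
    let N := ((Finset.range (p ^ 2)).filter
        (fun a : ℕ => (p : ℤ) ^ 2 ∣ f.eval (a : ℤ))).card
    let n₁ := {r : ZMod p | Polynomial.aeval r f = 0 ∧
        Polynomial.aeval r f.derivative ≠ 0}.ncard
    let n₂ := {r : ZMod p | Polynomial.aeval r f = 0 ∧
        Polynomial.aeval r f.derivative = 0}.ncard
    n₁ ≤ N ∧ N ≤ n₁ + p * n₂ := by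
  intro N n₁ n₂
  haveI : Fact p.Prime := ⟨hp⟩
  have hpz : (p:ℤ) ≠ 0 := by exact_mod_cast hp.ne_zero
  set S : Finset ℕ := (Finset.range (p ^ 2)).filter
      (fun a : ℕ => (p : ℤ) ^ 2 ∣ f.eval (a : ℤ)) with hSdef
  set T₁ : Finset (ZMod p) := Finset.univ.filter
      (fun r : ZMod p => aeval r f = 0 ∧ aeval r f.derivative ≠ 0) with hT1def
  set T₂ : Finset (ZMod p) := Finset.univ.filter
      (fun r : ZMod p => aeval r f = 0 ∧ aeval r f.derivative = 0) with hT2def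
  have e1 : n₁ = T₁.card := by
    rw [show n₁ = ({r : ZMod p | aeval r f = 0 ∧ aeval r f.derivative ≠ 0}).ncard from rfl,
      show {r : ZMod p | aeval r f = 0 ∧ aeval r f.derivative ≠ 0} = ↑T₁ by
        ext r; simp [hT1def], Set.ncard_coe_finset]
  have e2 : n₂ = T₂.card := by
    rw [show n₂ = ({r : ZMod p | aeval r f = 0 ∧ aeval r f.derivative = 0}).ncard from rfl,
      show {r : ZMod p | aeval r f = 0 ∧ aeval r f.derivative = 0} = ↑T₂ by
        ext r; simp [hT2def], Set.ncard_coe_finset]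
  have eN : N = S.card := rfl
  -- casting lemma for naturals
  have hred : ∀ (a : ℕ) (g : Polynomial ℤ),
      aeval ((a : ZMod p)) g = ((g.eval (a:ℤ) : ℤ) : ZMod p) := by
    intro a g
    have := aux_red p g (a : ℤ)
    rwa [Int.cast_natCast] at this
  have hmemS : ∀ a : ℕ, a ∈ S ↔ a < p^2 ∧ (p:ℤ)^2 ∣ f.eval (a:ℤ) := by
    intro a; simp [hSdef]
  have hroot : ∀ a : ℕ, a ∈ S → aeval ((a : ZMod p)) f = 0 := by
    intro a ha
    have h2 := ((hmemS a).mp ha).2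
    have h1 : (p:ℤ) ∣ f.eval (a:ℤ) := dvd_trans ⟨p, (sq (p:ℤ))⟩ h2
    rw [hred]
    exact (ZMod.intCast_zmod_eq_zero_iff_dvd _ _).mpr h1
  have hdvd_int : ∀ (a : ℕ) (g : Polynomial ℤ),
      (p:ℤ) ∣ g.eval (a:ℤ) ↔ aeval ((a : ZMod p)) g = 0 := by
    intro a g
    rw [hred]
    exact (ZMod.intCast_zmod_eq_zero_iff_dvd _ _).symm
  constructor
  · -- lower bound
    rw [e1, eN]
    apply Finset.card_le_card_of_surjOn (fun a : ℕ => ((a : ZMod p)))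
    intro r hr
    simp only [hT1def, Finset.coe_filter, Finset.mem_univ, true_and,
      Set.mem_setOf_eq] at hr
    obtain ⟨hr1, hr2⟩ := hr
    set x : ℤ := (r.val : ℤ) with hxdef
    have hxr : ((x : ZMod p)) = r := by
      rw [hxdef, Int.cast_natCast]; exact ZMod.natCast_rightInverse r
    have hx : (p:ℤ) ∣ f.eval x := by
      rw [aux_dvd_iff, hxr]; exact hr1
    have hd : ¬ (p:ℤ) ∣ f.derivative.eval x := by
      rw [aux_dvd_iff, hxr]; exact hr2
    obtain ⟨t, hT⟩ := aux_exists p hp f x hx hd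
    set y : ℤ := x + t * p with hydef
    set m : ℤ := y % ((p:ℤ)^2) with hmdef
    have hm0 : 0 ≤ m := Int.emod_nonneg y (pow_ne_zero 2 hpz)
    have hmlt : m < (p:ℤ)^2 := Int.emod_lt_of_pos y (by positivity)
    have hym : (p:ℤ)^2 ∣ y - m := by
      rw [hmdef, Int.emod_def]; exact ⟨y / (p:ℤ)^2, by ring⟩
    have hfm : (p:ℤ)^2 ∣ f.eval m := by
      have h := f.sub_dvd_eval_sub m y
      have h2 : (p:ℤ)^2 ∣ f.eval m - f.eval y :=
        dvd_trans (by simpa using hym.neg_right) h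
      have := dvd_add h2 hT
      simpa using this
    refine ⟨m.toNat, ?_, ?_⟩
    · rw [Finset.mem_coe, hmemS]
      constructor
      · have : (m.toNat : ℤ) < ((p^2 : ℕ) : ℤ) := by
          rw [Int.toNat_of_nonneg hm0]; push_cast; exact hmlt
        exact_mod_cast this
      · rwa [Int.toNat_of_nonneg hm0]
    · show ((m.toNat : ℕ) : ZMod p) = r
      have hcast : ((m.toNat : ℕ) : ZMod p) = ((m : ℤ) : ZMod p) := by
        rw [← Int.cast_natCast, Int.toNat_of_nonneg hm0]
      rw [hcast]
      have hmp : ((m : ℤ) : ZMod p) = ((y : ℤ) : ZMod p) := by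
        rw [ZMod.intCast_eq_intCast_iff]
        have hpm : (p:ℤ) ∣ y - m := dvd_trans ⟨p, (sq (p:ℤ))⟩ hym
        exact Int.modEq_iff_dvd.mpr hpm
      rw [hmp, hydef]
      push_cast
      rw [ZMod.natCast_self]
      simpa using hxr
  · -- upper bound
    rw [e1, e2, eN]
    have hsplit : (S.filter (fun a : ℕ => aeval ((a:ZMod p)) f.derivative ≠ 0)).card
        + (S.filter (fun a : ℕ => ¬ aeval ((a:ZMod p)) f.derivative ≠ 0)).card = S.card :=
      Finset.card_filter_add_card_filter_not _
    rw [← hsplit]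
    have hb1 : (S.filter (fun a : ℕ => aeval ((a:ZMod p)) f.derivative ≠ 0)).card ≤ T₁.card := by
      apply Finset.card_le_card_of_injOn (fun a : ℕ => ((a : ZMod p)))
      · intro a ha
        rw [Finset.mem_coe, Finset.mem_filter] at ha
        simp only [hT1def, Finset.mem_coe, Finset.mem_filter, Finset.mem_univ, true_and]
        exact ⟨hroot a ha.1, ha.2⟩
      · intro a ha b hb hab
        simp only [Finset.mem_coe, Finset.mem_filter] at ha hb
        have hd : ¬ (p:ℤ) ∣ f.derivative.eval (a:ℤ) := by
          rw [hdvd_int]; exact ha.2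
        have hab' : (p:ℤ) ∣ (b:ℤ) - (a:ℤ) :=
          (Nat.modEq_iff_dvd).mp ((ZMod.natCast_eq_natCast_iff a b p).mp hab)
        have key := aux_unique p hp f (a:ℤ) (b:ℤ) hab'
          ((hmemS a).mp ha.1).2 ((hmemS b).mp hb.1).2 hd
        have halt : a < p^2 := ((hmemS a).mp ha.1).1
        have hblt : b < p^2 := ((hmemS b).mp hb.1).1
        have hdd : ((p^2 : ℕ) : ℤ) ∣ (b:ℤ) - (a:ℤ) := by push_cast; exact key
        have hm2 : a % p^2 = b % p^2 := Nat.modEq_iff_dvd.mpr hdd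
        rwa [Nat.mod_eq_of_lt halt, Nat.mod_eq_of_lt hblt] at hm2
    have hb2 : (S.filter (fun a : ℕ => ¬ aeval ((a:ZMod p)) f.derivative ≠ 0)).card
        ≤ p * T₂.card := by
      apply Finset.card_le_mul_card_image_of_maps_to
        (f := fun a : ℕ => ((a : ZMod p))) (t := T₂)
      · intro a ha
        rw [Finset.mem_filter, not_not] at ha
        simp only [hT2def, Finset.mem_filter, Finset.mem_univ, true_and]
        exact ⟨hroot a ha.1, ha.2⟩
      · intro r hr
        apply le_trans (Finset.card_le_card_of_injOn (fun a : ℕ => a / p)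
          (t := Finset.range p) ?_ ?_) (by simp)
        · intro a ha
          simp only [Finset.mem_coe, Finset.mem_filter] at ha
          have halt : a < p^2 := ((hmemS a).mp ha.1.1).1
          rw [Finset.mem_coe, Finset.mem_range]
          rw [pow_two] at halt
          exact Nat.div_lt_of_lt_mul (by omega)
        · intro a ha b hb hab
          simp only [Finset.mem_coe, Finset.mem_filter] at ha hb
          have : (a : ZMod p) = (b : ZMod p) := by rw [ha.2, hb.2]
          have hmod : a % p = b % p := (ZMod.natCast_eq_natCast_iff a b p).mp this
          have hab' : a / p = b / p := hab
          calc a = p * (a / p) + a % p := (Nat.div_add_mod a p).symm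
            _ = p * (b / p) + b % p := by rw [hab', hmod]
            _ = b := Nat.div_add_mod b p
    omega
end
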